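/- In the network approximation algorithm, if the local estimate A_p|t of process p (for some round t < r) is strongly connected and nonempty at the end of round r, then p is a member of the root component of the round-t communication graph G^t. -/

import Mathlib

/-- A root component of a directed graph `G`: a strongly connected component
(maximal set of mutually reachable vertices) with no incoming edges from outside. -/
def IsRootComponent {V : Type*} (G : V → V → Prop) (R : Set V) : Prop :=
  R.Nonempty ∧ (∀ p ∈ R, ∀ q ∈ R, Relation.ReflTransGen G p q) ∧
    ∀ p ∈ R, ∀ q, G q p → q ∈ R

/-- A causal influence chain of length `k` from `p` (starting in round `r`) to `q`. -/
def InflChain {V : Type*} (G : ℕ → V → V → Prop) (r : ℕ) (p q : V) (k : ℕ) : Prop :=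
  ∃ f : ℕ → V, f 0 = p ∧ f k = q ∧ ∀ i < k, f i = f (i + 1) ∨ G (r + i) (f i) (f (i + 1))

/-- The dynamic causal distance `cd_r(p,q)`: length of the shortest causal influence
chain from `p` starting in round `r` to `q` (`⊤` if none exists, `1` for `p = q`). -/
noncomputable def cd {V : Type*} (G : ℕ → V → V → Prop) (r : ℕ) (p q : V) : ℕ∞ :=
  sInf {k : ℕ∞ | ∃ m : ℕ, k = (m : ℕ∞) ∧ 1 ≤ m ∧ InflChain G r p q m}

/-- If the local estimate `A_p|t` (with edge relation `E`, vertex set `S` the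
endpoints of its edges, containing `p`) is nonempty and strongly connected, and
it under-approximates `G^t` while being closed under in-edges of `G^t`, then its
vertex set is a root component of `G^t` and `p` is a member of it. -/
theorem stmt_13 {V : Type*} [Fintype V] (G : V → V → Prop)
    (E : V → V → Prop) (p : V) (S : Set V)
    (hS : S = {v | (∃ w, E v w) ∨ (∃ w, E w v)})
    (hpS : p ∈ S)
    (hsub : ∀ v w, E v w → G v w)
    (hclos : ∀ v w, E v w → ∀ v', G v' w → E v' w)
    (hconn : ∀ u ∈ S, ∀ v ∈ S, Relation.ReflTransGen E u v) :
    IsRootComponent G S ∧ p ∈ S := by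
  have hin : ∀ v ∈ S, ∃ x, E x v := by
    intro v hv
    rw [hS] at hv
    rcases hv with ⟨w, hvw⟩ | h
    · have hwS : w ∈ S := by rw [hS]; exact Or.inr ⟨v, hvw⟩
      have hvS : v ∈ S := by rw [hS]; exact Or.inl ⟨w, hvw⟩
      have := hconn w hwS v hvS
      rcases this.cases_tail with h | ⟨b, _, hb⟩
      · exact ⟨v, h ▸ hvw⟩
      · exact ⟨b, hb⟩
    · exact h
  refine ⟨⟨⟨p, hpS⟩, ?_, ?_⟩, hpS⟩
  · intro u hu v hv
    exact Relation.ReflTransGen.mono (fun a b h => hsub a b h) u v (hconn u hu v hv)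
  · intro v hv q hqv
    obtain ⟨x, hx⟩ := hin v hv
    have := hclos x v hx q hqv
    rw [hS]; exact Or.inl ⟨v, this⟩
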